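/- Let p, p' ∈ ℝⁿ be nonzero with p ≠ p', let n ∈ ℝⁿ with ‖n‖ = 1 and ⟨n, p'⟩ = 0, and set v := ‖p' − p‖⁻¹ • (p' − p) and v' := v − 2⟨v, n⟩ • n. Then angle(v', p') = angle(v, p) − angle(p, p'). (This is the one-step angle law for billiard reflection at a point p' of a cone with vertex at the origin: the angle the outgoing direction makes with the position vector of the reflection point equals the angle the incoming direction makes with the position vector of the previous point, minus the angle subtended at the vertex.) -/

import Mathlib

open InnerProductGeometry RealInnerProductSpace

/-- One-step angle law for billiard reflection at a point `p'` of a cone with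
vertex at the origin: `angle(v', p') = angle(v, p) − angle(p, p')`. -/
theorem angle_reflected_eq {n : ℕ} (p p' nv : EuclideanSpace ℝ (Fin n))
    (hp : p ≠ 0) (hp' : p' ≠ 0) (hne : p ≠ p')
    (hn : ‖nv‖ = 1) (hnp' : ⟪nv, p'⟫ = 0) :
    angle ((‖p' - p‖⁻¹ • (p' - p)) -
        (2 * ⟪‖p' - p‖⁻¹ • (p' - p), nv⟫) • nv) p' =
      angle (‖p' - p‖⁻¹ • (p' - p)) p - angle p p' := by
  set v : EuclideanSpace ℝ (Fin n) := ‖p' - p‖⁻¹ • (p' - p) with hv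
  have hsub : p' - p ≠ 0 := sub_ne_zero.2 (Ne.symm hne)
  have hpos : (0:ℝ) < ‖p' - p‖⁻¹ := inv_pos.2 (norm_pos_iff.2 hsub)
  -- the reflected vector has the same inner product with p' and the same norm
  have hinner : ⟪v - (2 * ⟪v, nv⟫) • nv, p'⟫ = ⟪v, p'⟫ := by
    rw [inner_sub_left, real_inner_smul_left nv p' (2 * ⟪v, nv⟫), hnp']
    ring
  have hnorm : ‖v - (2 * ⟪v, nv⟫) • nv‖ = ‖v‖ := by
    have h2 : ‖v - (2 * ⟪v, nv⟫) • nv‖ ^ 2 = ‖v‖ ^ 2 := by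
      rw [norm_sub_sq_real, real_inner_smul_right, norm_smul (2 * ⟪v, nv⟫) nv, Real.norm_eq_abs, hn,
        mul_one, sq_abs]
      ring
    calc ‖v - (2 * ⟪v, nv⟫) • nv‖ = Real.sqrt (‖v - (2 * ⟪v, nv⟫) • nv‖ ^ 2) :=
          (Real.sqrt_sq (norm_nonneg _)).symm
      _ = Real.sqrt (‖v‖ ^ 2) := by rw [h2]
      _ = ‖v‖ := Real.sqrt_sq (norm_nonneg _)
  have hLHS : angle (v - (2 * ⟪v, nv⟫) • nv) p' = angle v p' := by
    unfold angle
    rw [hinner, hnorm]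
  rw [hLHS, hv, angle_smul_left_of_pos _ _ hpos, angle_smul_left_of_pos _ _ hpos]
  -- triangle angle sum
  have htri := angle_add_angle_sub_add_angle_sub_eq_pi p hp'
  have h1 : angle p (p - p') = Real.pi - angle (p' - p) p := by
    rw [show p - p' = -(p' - p) by abel, angle_neg_right, angle_comm]
  rw [h1, angle_comm p' (p' - p)] at htri
  linarith
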